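/- arXiv:1009.1977 — 5 statements merged into one kernel-verified Lean document; each statement's English description precedes it below -/
import Mathlib

section
/- Let ⟨D₁, ≤₁, ⊥₁, ⊤₁, ∘₁⟩ and ⟨D₂, ≤₂, ⊥₂, ⊤₂, ∘₂⟩ be qualification domains, and let S = ((D₁ \ {⊥₁}) × (D₂ \ {⊥₂})) ∪ {(⊥₁,⊥₂)} be the carrier of the strict cartesian product. For (d₁,d₂), (e₁,e₂) ∈ S, the strict pair ⟨d₁ ⊓₁ e₁, d₂ ⊓₂ e₂⟩ (which equals (d₁ ⊓₁ e₁, d₂ ⊓₂ e₂) if both components are ≠ ⊥, and (⊥₁,⊥₂) otherwise) belongs to S and is the greatest lower bound of {(d₁,d₂), (e₁,e₂)} within S with respect to the componentwise order: it is a lower bound of both elements, and every (x,y) ∈ S that is a lower bound of both satisfies (x,y) ≤ ⟨d₁ ⊓₁ e₁, d₂ ⊓₂ e₂⟩. -/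
open scoped Classical

/-- In the strict cartesian product of two qualification domains,
the strict pair of componentwise meets is the greatest lower bound. -/
theorem strictProduct_glb
    {D₁ D₂ : Type*} [Lattice D₁] [BoundedOrder D₁] [Lattice D₂] [BoundedOrder D₂]
    (att₁ : D₁ → D₁ → D₁) (att₂ : D₂ → D₂ → D₂)
    (hassoc₁ : ∀ d e f : D₁, att₁ (att₁ d e) f = att₁ d (att₁ e f))
    (hcomm₁ : ∀ d e : D₁, att₁ d e = att₁ e d)
    (hmono₁ : ∀ d d' e e' : D₁, d ≤ d' → e ≤ e' → att₁ d e ≤ att₁ d' e')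
    (htop₁ : ∀ d : D₁, att₁ d ⊤ = d)
    (hbot₁ : ∀ d : D₁, att₁ d ⊥ = ⊥)
    (hle₁ : ∀ d e : D₁, att₁ d e ≤ e)
    (hdistr₁ : ∀ d e₁ e₂ : D₁, att₁ d (e₁ ⊓ e₂) = att₁ d e₁ ⊓ att₁ d e₂)
    (hassoc₂ : ∀ d e f : D₂, att₂ (att₂ d e) f = att₂ d (att₂ e f))
    (hcomm₂ : ∀ d e : D₂, att₂ d e = att₂ e d)
    (hmono₂ : ∀ d d' e e' : D₂, d ≤ d' → e ≤ e' → att₂ d e ≤ att₂ d' e')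
    (htop₂ : ∀ d : D₂, att₂ d ⊤ = d)
    (hbot₂ : ∀ d : D₂, att₂ d ⊥ = ⊥)
    (hle₂ : ∀ d e : D₂, att₂ d e ≤ e)
    (hdistr₂ : ∀ d e₁ e₂ : D₂, att₂ d (e₁ ⊓ e₂) = att₂ d e₁ ⊓ att₂ d e₂)
    :
    let S : Set (D₁ × D₂) :=
      (({(⊥ : D₁)}ᶜ : Set D₁) ×ˢ ({(⊥ : D₂)}ᶜ : Set D₂)) ∪ {((⊥ : D₁), (⊥ : D₂))}
    let spair : D₁ → D₂ → D₁ × D₂ := fun a b =>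
      if a ≠ ⊥ ∧ b ≠ ⊥ then (a, b) else ((⊥ : D₁), (⊥ : D₂))
    ∀ d e : D₁ × D₂, d ∈ S → e ∈ S →
      spair (d.1 ⊓ e.1) (d.2 ⊓ e.2) ∈ S ∧
      spair (d.1 ⊓ e.1) (d.2 ⊓ e.2) ≤ d ∧
      spair (d.1 ⊓ e.1) (d.2 ⊓ e.2) ≤ e ∧
      (∀ x : D₁ × D₂, x ∈ S → x ≤ d → x ≤ e → x ≤ spair (d.1 ⊓ e.1) (d.2 ⊓ e.2)) := by
  intro S spair d e hd he
  by_cases h : (d.1 ⊓ e.1) ≠ ⊥ ∧ (d.2 ⊓ e.2) ≠ ⊥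
  · have hsp : spair (d.1 ⊓ e.1) (d.2 ⊓ e.2) = (d.1 ⊓ e.1, d.2 ⊓ e.2) := if_pos h
    refine ⟨?_, ?_, ?_, ?_⟩
    · rw [hsp]; exact Or.inl ⟨h.1, h.2⟩
    · rw [hsp]; exact ⟨inf_le_left, inf_le_left⟩
    · rw [hsp]; exact ⟨inf_le_right, inf_le_right⟩
    · intro x _ hxd hxe
      rw [hsp]
      exact ⟨le_inf hxd.1 hxe.1, le_inf hxd.2 hxe.2⟩
  · have hsp : spair (d.1 ⊓ e.1) (d.2 ⊓ e.2) = ((⊥ : D₁), (⊥ : D₂)) := if_neg h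
    refine ⟨?_, ?_, ?_, ?_⟩
    · rw [hsp]; exact Or.inr rfl
    · rw [hsp]; exact ⟨bot_le, bot_le⟩
    · rw [hsp]; exact ⟨bot_le, bot_le⟩
    · intro x hx hxd hxe
      rw [hsp]
      rcases hx with hx | hx
      · exfalso
        rcases not_and_or.mp h with h1 | h1
        · have : x.1 ≤ (⊥ : D₁) := by
            have := le_inf hxd.1 hxe.1
            rwa [not_ne_iff.mp h1] at this
          exact hx.1 (le_bot_iff.mp this)
        · have : x.2 ≤ (⊥ : D₂) := by
            have := le_inf hxd.2 hxe.2
            rwa [not_ne_iff.mp h1] at this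
          exact hx.2 (le_bot_iff.mp this)
      · have hx' : x = ((⊥:D₁),(⊥:D₂)) := hx
        rw [hx']
end

section
/- Let ⟨D₁, ≤₁, ⊥₁, ⊤₁, ∘₁⟩ and ⟨D₂, ≤₂, ⊥₂, ⊤₂, ∘₂⟩ be qualification domains, and let S = ((D₁ \ {⊥₁}) × (D₂ \ {⊥₂})) ∪ {(⊥₁,⊥₂)} be the carrier of the strict cartesian product. For (d₁,d₂), (e₁,e₂) ∈ S, the componentwise join (d₁ ⊔₁ e₁, d₂ ⊔₂ e₂) belongs to S and is the least upper bound of {(d₁,d₂), (e₁,e₂)} within S with respect to the componentwise order. -/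
/-- In the strict cartesian product of two qualification domains,
the componentwise join is the least upper bound. -/
theorem strictProduct_lub
    {D₁ D₂ : Type*} [Lattice D₁] [BoundedOrder D₁] [Lattice D₂] [BoundedOrder D₂]
    (att₁ : D₁ → D₁ → D₁) (att₂ : D₂ → D₂ → D₂)
    (hassoc₁ : ∀ d e f : D₁, att₁ (att₁ d e) f = att₁ d (att₁ e f))
    (hcomm₁ : ∀ d e : D₁, att₁ d e = att₁ e d)
    (hmono₁ : ∀ d d' e e' : D₁, d ≤ d' → e ≤ e' → att₁ d e ≤ att₁ d' e')
    (htop₁ : ∀ d : D₁, att₁ d ⊤ = d)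
    (hbot₁ : ∀ d : D₁, att₁ d ⊥ = ⊥)
    (hle₁ : ∀ d e : D₁, att₁ d e ≤ e)
    (hdistr₁ : ∀ d e₁ e₂ : D₁, att₁ d (e₁ ⊓ e₂) = att₁ d e₁ ⊓ att₁ d e₂)
    (hassoc₂ : ∀ d e f : D₂, att₂ (att₂ d e) f = att₂ d (att₂ e f))
    (hcomm₂ : ∀ d e : D₂, att₂ d e = att₂ e d)
    (hmono₂ : ∀ d d' e e' : D₂, d ≤ d' → e ≤ e' → att₂ d e ≤ att₂ d' e')
    (htop₂ : ∀ d : D₂, att₂ d ⊤ = d)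
    (hbot₂ : ∀ d : D₂, att₂ d ⊥ = ⊥)
    (hle₂ : ∀ d e : D₂, att₂ d e ≤ e)
    (hdistr₂ : ∀ d e₁ e₂ : D₂, att₂ d (e₁ ⊓ e₂) = att₂ d e₁ ⊓ att₂ d e₂)
    :
    let S : Set (D₁ × D₂) :=
      (({(⊥ : D₁)}ᶜ : Set D₁) ×ˢ ({(⊥ : D₂)}ᶜ : Set D₂)) ∪ {((⊥ : D₁), (⊥ : D₂))}
    ∀ d e : D₁ × D₂, d ∈ S → e ∈ S →
      ((d.1 ⊔ e.1, d.2 ⊔ e.2) : D₁ × D₂) ∈ S ∧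
      d ≤ (d.1 ⊔ e.1, d.2 ⊔ e.2) ∧
      e ≤ (d.1 ⊔ e.1, d.2 ⊔ e.2) ∧
      (∀ x : D₁ × D₂, x ∈ S → d ≤ x → e ≤ x → (d.1 ⊔ e.1, d.2 ⊔ e.2) ≤ x) := by
  intro S d e hd he
  refine ⟨?_, ⟨le_sup_left, le_sup_left⟩, ⟨le_sup_right, le_sup_right⟩,
    fun x _ hdx hex => ⟨sup_le hdx.1 hex.1, sup_le hdx.2 hex.2⟩⟩
  rcases hd with ⟨hd1, hd2⟩ | hd
  · left
    exact ⟨fun h => hd1 (le_bot_iff.mp (h ▸ le_sup_left)),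
           fun h => hd2 (le_bot_iff.mp (h ▸ le_sup_left))⟩
  · rcases he with ⟨he1, he2⟩ | he
    · left
      exact ⟨fun h => he1 (le_bot_iff.mp (h ▸ le_sup_right)),
             fun h => he2 (le_bot_iff.mp (h ▸ le_sup_right))⟩
    · right
      have hd' : d = (⊥, ⊥) := hd
      have he' : e = (⊥, ⊥) := he
      simp [hd', he']
end

section
/- Let ⟨D₁, ≤₁, ⊥₁, ⊤₁, ∘₁⟩ and ⟨D₂, ≤₂, ⊥₂, ⊤₂, ∘₂⟩ be stable qualification domains, and let S = ((D₁ \ {⊥₁}) × (D₂ \ {⊥₂})) ∪ {(⊥₁,⊥₂)} be the carrier of the strict cartesian product. Then for all (d₁,d₂), (e₁,e₂), (e₁',e₂') ∈ S, writing ⟨a,b⟩ for the strict pair, one has (d₁ ∘₁ (first component of ⟨e₁ ⊓₁ e₁', e₂ ⊓₂ e₂'⟩), d₂ ∘₂ (second component of ⟨e₁ ⊓₁ e₁', e₂ ⊓₂ e₂'⟩)) = ⟨(d₁ ∘₁ e₁) ⊓₁ (d₁ ∘₁ e₁'), (d₂ ∘₂ e₂) ⊓₂ (d₂ ∘₂ e₂')⟩;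 that is, the componentwise attenuation on the strict product distributes over the strict-product meet given by strict pairs of componentwise meets. -/
open scoped Classical

/-- In the strict cartesian product of two stable qualification
domains, componentwise attenuation distributes over the strict-product meet. -/
theorem strictProduct_attenuation_distrib
    {D₁ D₂ : Type*} [Lattice D₁] [BoundedOrder D₁] [Lattice D₂] [BoundedOrder D₂]
    (att₁ : D₁ → D₁ → D₁) (att₂ : D₂ → D₂ → D₂)
    (hassoc₁ : ∀ d e f : D₁, att₁ (att₁ d e) f = att₁ d (att₁ e f))
    (hcomm₁ : ∀ d e : D₁, att₁ d e = att₁ e d)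
    (hmono₁ : ∀ d d' e e' : D₁, d ≤ d' → e ≤ e' → att₁ d e ≤ att₁ d' e')
    (htop₁ : ∀ d : D₁, att₁ d ⊤ = d)
    (hbot₁ : ∀ d : D₁, att₁ d ⊥ = ⊥)
    (hle₁ : ∀ d e : D₁, att₁ d e ≤ e)
    (hdistr₁ : ∀ d e₁ e₂ : D₁, att₁ d (e₁ ⊓ e₂) = att₁ d e₁ ⊓ att₁ d e₂)
    (hassoc₂ : ∀ d e f : D₂, att₂ (att₂ d e) f = att₂ d (att₂ e f))
    (hcomm₂ : ∀ d e : D₂, att₂ d e = att₂ e d)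
    (hmono₂ : ∀ d d' e e' : D₂, d ≤ d' → e ≤ e' → att₂ d e ≤ att₂ d' e')
    (htop₂ : ∀ d : D₂, att₂ d ⊤ = d)
    (hbot₂ : ∀ d : D₂, att₂ d ⊥ = ⊥)
    (hle₂ : ∀ d e : D₂, att₂ d e ≤ e)
    (hdistr₂ : ∀ d e₁ e₂ : D₂, att₂ d (e₁ ⊓ e₂) = att₂ d e₁ ⊓ att₂ d e₂)
    (hstable₁ : ∀ d e : D₁, d ≠ ⊥ → e ≠ ⊥ → att₁ d e ≠ ⊥)
    (hstable₂ : ∀ d e : D₂, d ≠ ⊥ → e ≠ ⊥ → att₂ d e ≠ ⊥)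
    :
    let S : Set (D₁ × D₂) :=
      (({(⊥ : D₁)}ᶜ : Set D₁) ×ˢ ({(⊥ : D₂)}ᶜ : Set D₂)) ∪ {((⊥ : D₁), (⊥ : D₂))}
    let spair : D₁ → D₂ → D₁ × D₂ := fun a b =>
      if a ≠ ⊥ ∧ b ≠ ⊥ then (a, b) else ((⊥ : D₁), (⊥ : D₂))
    ∀ d e e' : D₁ × D₂, d ∈ S → e ∈ S → e' ∈ S →
      ((att₁ d.1 (spair (e.1 ⊓ e'.1) (e.2 ⊓ e'.2)).1,
        att₂ d.2 (spair (e.1 ⊓ e'.1) (e.2 ⊓ e'.2)).2) : D₁ × D₂)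
        = spair (att₁ d.1 e.1 ⊓ att₁ d.1 e'.1) (att₂ d.2 e.2 ⊓ att₂ d.2 e'.2) := by
  intro S spair d e e' hd he he'
  have hbot₁' : ∀ x : D₁, att₁ ⊥ x = ⊥ := fun x => by rw [hcomm₁, hbot₁]
  have hbot₂' : ∀ x : D₂, att₂ ⊥ x = ⊥ := fun x => by rw [hcomm₂, hbot₂]
  rcases hd with ⟨hd1, hd2⟩ | hd
  · -- d has both components nonbot
    simp only [Set.mem_compl_iff, Set.mem_singleton_iff] at hd1 hd2
    by_cases hm : (e.1 ⊓ e'.1) ≠ ⊥ ∧ (e.2 ⊓ e'.2) ≠ ⊥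
    · have h1 : att₁ d.1 e.1 ⊓ att₁ d.1 e'.1 ≠ ⊥ := by
        rw [← hdistr₁]; exact hstable₁ _ _ hd1 hm.1
      have h2 : att₂ d.2 e.2 ⊓ att₂ d.2 e'.2 ≠ ⊥ := by
        rw [← hdistr₂]; exact hstable₂ _ _ hd2 hm.2
      simp only [spair, if_pos hm, hdistr₁, hdistr₂]
      rw [if_pos ⟨h1, h2⟩]
    · have hrhs : ¬((att₁ d.1 e.1 ⊓ att₁ d.1 e'.1) ≠ ⊥ ∧ (att₂ d.2 e.2 ⊓ att₂ d.2 e'.2) ≠ ⊥) := by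
        rintro ⟨h1, h2⟩
        apply hm
        constructor
        · intro h; apply h1; rw [← hdistr₁, h, hbot₁]
        · intro h; apply h2; rw [← hdistr₂, h, hbot₂]
      simp only [spair, if_neg hm, if_neg hrhs, hbot₁, hbot₂]
  · -- d = (⊥, ⊥)
    have h1 : d.1 = ⊥ := congrArg Prod.fst hd
    have h2 : d.2 = ⊥ := congrArg Prod.snd hd
    have hrhs : ¬((att₁ d.1 e.1 ⊓ att₁ d.1 e'.1) ≠ ⊥ ∧ (att₂ d.2 e.2 ⊓ att₂ d.2 e'.2) ≠ ⊥) := by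
      rw [h1]; rintro ⟨hx, -⟩; exact hx (by rw [hbot₁', hbot₁', inf_idem])
    simp only [spair, if_neg hrhs, h1, h2, hbot₁', hbot₂']
    by_cases hm : (e.1 ⊓ e'.1) ≠ ⊥ ∧ (e.2 ⊓ e'.2) ≠ ⊥ <;> simp [hm, hbot₁', hbot₂']
end

section
/- Fix a first-order language L and a type V of variables, and suppose there exist at least two distinct ground terms in Term(L, ∅). Then for all terms t, s ∈ Term(L, V): if tη = sη for EVERY valuation η : V → Term(L, ∅), then t = s. (That is, the equivalence relation ≈_∅ of equality under all valuations coincides with syntactic equality of terms.) -/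
open FirstOrder Language

namespace TermAux

variable {L : Language} {V : Type*}

/-- A variable occurs in a term. -/
def occurs (v : V) : L.Term V → Prop
  | .var w => w = v
  | .func _ ts => ∃ i, occurs v (ts i)

/-- Size of a term. -/
def tsize {α : Type*} : L.Term α → ℕ
  | .var _ => 1
  | .func _ ts => 1 + ∑ i, tsize (ts i)

lemma tsize_subst_ge (v : V) (s : L.Term V) (η : V → L.Term Empty)
    (hv : occurs v s) : tsize (η v) ≤ tsize (s.subst η) := by
  induction s with
  | var w =>
    obtain rfl : w = v := hv
    simp [Term.subst]
  | func f ts ih =>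
    obtain ⟨i, hi⟩ := hv
    calc tsize (η v) ≤ tsize ((ts i).subst η) := ih i hi
    _ ≤ ∑ j, tsize ((ts j).subst η) :=
        Finset.single_le_sum (f := fun j => tsize ((ts j).subst η))
          (fun _ _ => Nat.zero_le _) (Finset.mem_univ i)
    _ ≤ 1 + ∑ j, tsize ((ts j).subst η) := Nat.le_add_left _ _
    _ = tsize ((Term.func f ts).subst η) := by simp [Term.subst, tsize]

lemma tsize_subst_gt {l : ℕ} (v : V) (f : L.Functions l) (ts : Fin l → L.Term V)
    (η : V → L.Term Empty) (hv : occurs v (Term.func f ts)) :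
    tsize (η v) < tsize ((Term.func f ts).subst η) := by
  obtain ⟨i, hi⟩ := hv
  calc tsize (η v) ≤ tsize ((ts i).subst η) := tsize_subst_ge v (ts i) η hi
  _ ≤ ∑ j, tsize ((ts j).subst η) :=
      Finset.single_le_sum (f := fun j => tsize ((ts j).subst η))
        (fun _ _ => Nat.zero_le _) (Finset.mem_univ i)
  _ < 1 + ∑ j, tsize ((ts j).subst η) := Nat.lt_one_add_iff.mpr le_rfl
  _ = tsize ((Term.func f ts).subst η) := by simp [Term.subst, tsize]

lemma subst_update [DecidableEq V] (v : V) (s : L.Term V) (η : V → L.Term Empty)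
    (g : L.Term Empty) (hv : ¬ occurs v s) :
    s.subst (Function.update η v g) = s.subst η := by
  induction s with
  | var w =>
    simp only [occurs] at hv
    simp [Term.subst, Function.update_of_ne hv]
  | func f ts ih =>
    have hi : ∀ i, ¬ occurs v (ts i) := fun i hi => hv ⟨i, hi⟩
    simp only [Term.subst]
    congr 1
    funext i
    exact ih i (hi i)

end TermAux

open TermAux

/-- If there are at least two distinct ground terms, then two
terms that agree under every valuation are syntactically equal
(`≈_∅` coincides with syntactic equality). -/
theorem eq_of_forall_valuation_eq {L : Language} {V : Type*}
    (hg : ∃ g₁ g₂ : L.Term Empty, g₁ ≠ g₂)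
    (t s : L.Term V)
    (h : ∀ η : V → L.Term Empty, t.subst η = s.subst η) :
    t = s := by
  classical
  obtain ⟨g₁, g₂, hgne⟩ := hg
  have key : ∀ (v : V) (s : L.Term V),
      (∀ η : V → L.Term Empty, (Term.var v : L.Term V).subst η = s.subst η) →
      (Term.var v : L.Term V) = s := by
    intro v s hs
    cases s with
    | var w =>
      by_cases hvw : v = w
      · rw [hvw]
      · exfalso
        have := hs (fun x => if x = v then g₁ else g₂)
        simp [Term.subst, if_neg (Ne.symm hvw)] at this
        exact hgne this
    | func f ts =>
      exfalso
      by_cases hocc : occurs v (Term.func f ts)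
      · have h1 := hs (fun _ => g₁)
        have hlt := tsize_subst_gt v f ts (fun _ => g₁) hocc
        simp only [Term.subst] at h1
        have hlt' : tsize g₁ < tsize ((Term.func f ts).subst fun _ => g₁) := hlt
        exact absurd (congrArg tsize h1) (Nat.ne_of_lt hlt')
      · set η₁ : V → L.Term Empty := fun _ => g₁ with hη₁
        set η₂ : V → L.Term Empty := Function.update η₁ v g₂ with hη₂
        have e1 := hs η₁
        have e2 := hs η₂
        have e3 : (Term.func f ts).subst η₂ = (Term.func f ts).subst η₁ :=
          subst_update v _ η₁ g₂ hocc
        rw [e3, ← e1] at e2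
        have hvv : η₂ v = η₁ v := e2
        simp [hη₂, hη₁, Function.update_self] at hvv
        exact hgne hvv.symm
  induction t generalizing s with
  | var v => exact key v s h
  | func f ts ih =>
    cases s with
    | var w =>
      exact (key w (Term.func f ts) (fun η => (h η).symm)).symm
    | func f' ss =>
      have h0 := h (fun _ => g₁)
      simp only [Term.subst] at h0
      injection h0 with hl hf hts0
      subst hl
      have hf' : f = f' := eq_of_heq hf
      subst hf'
      have hts : ∀ i, ts i = ss i := by
        intro i
        apply ih i
        intro η
        have hη := h η
        simp only [Term.subst] at hη
        injection hη with hl' hf'' h2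
        exact congrFun h2 i
      rw [funext hts]
end

section
/- Fix a first-order language L, a type V of variables, and a lattice D with least element ⊥ and greatest element ⊤. Let ℛ assign to each pair of function symbols of L of the same arity an element of D, with ℛ(f,f) = ⊤ and ℛ(f,g) = ℛ(g,f). Let R̂ : Term(L,V) × Term(L,V) → D be the function defined by structural recursion by: R̂(X,X) = ⊤ for a variable X; R̂(X,Y) = ⊥ for distinct variables X, Y; R̂(X, c(s₁,…,sₘ)) = R̂(c(s₁,…,sₘ), X) = ⊥ for a variable X and function symbol c; R̂(c(t₁,…,tₙ), c'(s₁,…,sₘ)) = ⊥ when n ≠ m; and R̂(c(t₁,…,tₙ), c'(s₁,…,sₙ)) = ℛ(c,c') ⊓ R̂(t₁,s₁) ⊓ … ⊓ R̂(tₙ,sₙ) when the arities agree. For λ ∈ D with λ ≠ ⊥, write t ≈_λ s iff λ ≤ R̂(t,s). Then: (1) R̂(t,t) = ⊤ for every term t, so ≈_λ is reflexive; (2) R̂(t,s) = R̂(s,t) for all terms t, s, so ≈_λ is symmetric; (3) if moreover ℛ is transitive, i.e. ℛ(f,g) ⊓ ℛ(g,h) ≤ ℛ(f,h) for all same-arity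 function symbols f, g, h, then R̂(t,s) ⊓ R̂(s,u) ≤ R̂(t,u) for all terms t, s, u, so ≈_λ is transitive and hence an equivalence relation. -/
open FirstOrder Language

/-- Proximity Lemma: the canonical extension `R̂` of a `D`-valued
proximity relation `ℛ` on function symbols to terms yields relations `≈_λ`
(`λ ≤ R̂(t,s)`) that are reflexive and symmetric, and also transitive when `ℛ`
is transitive. -/
theorem proximity_extension_properties {L : Language} {V : Type*}
    {D : Type*} [Lattice D] [BoundedOrder D]
    (R : ∀ n, L.Functions n → L.Functions n → D)
    (hRrefl : ∀ n (f : L.Functions n), R n f f = ⊤)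
    (hRsymm : ∀ n (f g : L.Functions n), R n f g = R n g f)
    (Rhat : L.Term V → L.Term V → D)
    (hvarRefl : ∀ X : V, Rhat (Term.var X) (Term.var X) = ⊤)
    (hvarNe : ∀ X Y : V, X ≠ Y → Rhat (Term.var X) (Term.var Y) = ⊥)
    (hvarFunc : ∀ (X : V) (m : ℕ) (c : L.Functions m) (ss : Fin m → L.Term V),
      Rhat (Term.var X) (Term.func c ss) = ⊥ ∧ Rhat (Term.func c ss) (Term.var X) = ⊥)
    (hfuncNe : ∀ (n m : ℕ), n ≠ m →
      ∀ (c : L.Functions n) (ts : Fin n → L.Term V)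
        (c' : L.Functions m) (ss : Fin m → L.Term V),
      Rhat (Term.func c ts) (Term.func c' ss) = ⊥)
    (hfuncEq : ∀ (n : ℕ) (c c' : L.Functions n) (ts ss : Fin n → L.Term V),
      Rhat (Term.func c ts) (Term.func c' ss)
        = R n c c' ⊓ (Finset.univ : Finset (Fin n)).inf fun i => Rhat (ts i) (ss i)) :
    (∀ t : L.Term V, Rhat t t = ⊤) ∧
    (∀ t s : L.Term V, Rhat t s = Rhat s t) ∧
    ((∀ n (f g h : L.Functions n), R n f g ⊓ R n g h ≤ R n f h) →
      ∀ t s u : L.Term V, Rhat t s ⊓ Rhat s u ≤ Rhat t u) ∧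
    (∀ lam : D, lam ≠ ⊥ →
      (∀ t : L.Term V, lam ≤ Rhat t t) ∧
      (∀ t s : L.Term V, lam ≤ Rhat t s → lam ≤ Rhat s t) ∧
      ((∀ n (f g h : L.Functions n), R n f g ⊓ R n g h ≤ R n f h) →
        ∀ t s u : L.Term V, lam ≤ Rhat t s → lam ≤ Rhat s u → lam ≤ Rhat t u)) := by
  classical
  have hrefl : ∀ t : L.Term V, Rhat t t = ⊤ := by
    intro t
    induction t with
    | var X => exact hvarRefl X
    | func c ts ih =>
      rw [hfuncEq]
      simp [hRrefl, ih]
  have hsymm : ∀ t s : L.Term V, Rhat t s = Rhat s t := by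
    intro t
    induction t with
    | var X =>
      intro s
      cases s with
      | var Y =>
        by_cases h : X = Y
        · subst h; rfl
        · rw [hvarNe X Y h, hvarNe Y X (Ne.symm h)]
      | func c ss =>
        rw [(hvarFunc X _ c ss).1, (hvarFunc X _ c ss).2]
    | func c ts ih =>
      intro s
      cases s with
      | var Y => rw [(hvarFunc Y _ c ts).1, (hvarFunc Y _ c ts).2]
      | @func m c' ss =>
        rename_i n
        by_cases h : n = m
        · subst h
          rw [hfuncEq, hfuncEq, hRsymm]
          congr 1
          exact Finset.inf_congr rfl fun i _ => ih i (ss i)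
        · rw [hfuncNe n m h, hfuncNe m n (Ne.symm h)]
  have htrans : (∀ n (f g h : L.Functions n), R n f g ⊓ R n g h ≤ R n f h) →
      ∀ t s u : L.Term V, Rhat t s ⊓ Rhat s u ≤ Rhat t u := by
    intro hRt t
    induction t with
    | var X =>
      intro s u
      cases s with
      | var Y =>
        by_cases h : X = Y
        · subst h
          rw [hvarRefl]
          exact le_trans inf_le_right le_rfl
        · rw [hvarNe X Y h]
          exact le_trans inf_le_left bot_le
      | func c ss =>
        rw [(hvarFunc X _ c ss).1]
        exact le_trans inf_le_left bot_le
    | func c ts ih =>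
      rename_i n
      intro s u
      cases s with
      | var Y =>
        rw [(hvarFunc Y _ c ts).2]
        exact le_trans inf_le_left bot_le
      | @func m c' ss =>
        by_cases h : n = m
        · subst h
          cases u with
          | var Z =>
            rw [(hvarFunc Z _ c' ss).2]
            exact le_trans inf_le_right bot_le
          | @func k c'' us =>
            by_cases hk : n = k
            · subst hk
              rw [hfuncEq, hfuncEq, hfuncEq]
              refine le_inf ?_ ?_
              · refine le_trans ?_ (hRt n c c' c'')
                exact inf_le_inf (inf_le_left) (inf_le_left)
              · rw [Finset.le_inf_iff]
                intro i _
                refine le_trans ?_ (ih i (ss i) (us i))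
                refine inf_le_inf ?_ ?_
                · exact le_trans inf_le_right (Finset.inf_le (Finset.mem_univ i))
                · exact le_trans inf_le_right (Finset.inf_le (Finset.mem_univ i))
            · rw [hfuncNe n k hk, hfuncNe n k hk]
              exact le_trans inf_le_right bot_le
        · rw [hfuncNe n m h]
          exact le_trans inf_le_left bot_le
  refine ⟨hrefl, hsymm, htrans, fun lam _ => ⟨?_, ?_, ?_⟩⟩
  · intro t; rw [hrefl]; exact le_top
  · intro t s h; rwa [hsymm]
  · intro hRt t s u h1 h2
    exact le_trans (le_inf h1 h2) (htrans hRt t s u)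
end
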